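/- Fix J ≠ 0 and q_i, q_j ∈ (0,1), with d_i, d_j > 2 integers. Then the function β ↦ c₁/(q_i q_j(1-q_i)(1-q_j)) + c₂/T_β(q_i,q_j) is strictly decreasing in β on (0,∞), where c₁, c₂, T_β are as in the edge-specific Bethe Hessian determinant. -/

import Mathlib

noncomputable def xiOpt (α x y : ℝ) : ℝ :=
  (1 / (2 * α)) * ((1 + α * (x + y)) -
    Real.sqrt ((1 + α * (x + y)) ^ 2 - 4 * α * (1 + α) * x * y))

noncomputable def TOpt (α x y : ℝ) : ℝ :=
  x * y * (1 - x) * (1 - y) - (xiOpt α x y - x * y) ^ 2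

noncomputable def etaOpt (α x y : ℝ) : ℝ :=
  (1 / (2 * α)) * ((1 + α * (x + y)) +
    Real.sqrt ((1 + α * (x + y)) ^ 2 - 4 * α * (1 + α) * x * y))

lemma disc_pos {α x y : ℝ} (hx0 : 0 < x) (hx1 : x < 1) (hy0 : 0 < y) (hy1 : y < 1)
    (hα : -1 < α) : 0 < (1 + α * (x + y)) ^ 2 - 4 * α * (1 + α) * x * y := by
  rcases lt_trichotomy α 0 with h | h | h
  · nlinarith [sq_nonneg (1 + α * (x + y)),
      mul_pos (mul_pos (neg_pos.2 h) (by linarith : (0:ℝ) < 1 + α)) (mul_pos hx0 hy0)]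
  · subst h; norm_num
  · nlinarith [sq_nonneg (α * (x - y)),
      mul_pos (mul_pos h hx0) (sub_pos.2 hy1),
      mul_pos (mul_pos h hy0) (sub_pos.2 hx1)]

lemma twoalpha_xi {α x y : ℝ} (hα0 : α ≠ 0) :
    2 * α * xiOpt α x y = (1 + α * (x + y)) -
      Real.sqrt ((1 + α * (x + y)) ^ 2 - 4 * α * (1 + α) * x * y) := by
  rw [xiOpt]; field_simp

lemma twoalpha_eta {α x y : ℝ} (hα0 : α ≠ 0) :
    2 * α * etaOpt α x y = (1 + α * (x + y)) +
      Real.sqrt ((1 + α * (x + y)) ^ 2 - 4 * α * (1 + α) * x * y) := by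
  rw [etaOpt]; field_simp

lemma fact_eq {α x y : ℝ} (hα0 : α ≠ 0)
    (hd : 0 ≤ (1 + α * (x + y)) ^ 2 - 4 * α * (1 + α) * x * y) (t : ℝ) :
    α * t ^ 2 - (1 + α * (x + y)) * t + (1 + α) * x * y
      = α * (t - xiOpt α x y) * (t - etaOpt α x y) := by
  have hs := Real.sq_sqrt hd
  have hξ := twoalpha_xi (x := x) (y := y) hα0
  have hη := twoalpha_eta (x := x) (y := y) hα0
  set s := Real.sqrt ((1 + α * (x + y)) ^ 2 - 4 * α * (1 + α) * x * y) with hsdef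
  set ξ := xiOpt α x y
  set η := etaOpt α x y
  have h4 : 4 * α * (α * (t - ξ) * (t - η)) = 4 * α * (α * t ^ 2 - (1 + α * (x + y)) * t + (1 + α) * x * y) := by
    have e1 : 4 * α * (α * (t - ξ) * (t - η)) = (2*α*t - 2*α*ξ) * (2*α*t - 2*α*η) := by ring
    rw [e1, hξ, hη]
    nlinarith [hs]
  have h4' := mul_left_cancel₀ (by simpa using (mul_ne_zero (by norm_num : (4:ℝ) ≠ 0) hα0)) h4
  linarith [h4']


lemma eta_sub_xi {α x y : ℝ} (hα0 : α ≠ 0) :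
    etaOpt α x y - xiOpt α x y =
      Real.sqrt ((1 + α * (x + y)) ^ 2 - 4 * α * (1 + α) * x * y) / α := by
  rw [xiOpt, etaOpt]; field_simp; ring

set_option maxHeartbeats 1000000 in
lemma xi_basic {α x y : ℝ} (hx0 : 0 < x) (hx1 : x < 1) (hy0 : 0 < y) (hy1 : y < 1)
    (hα1 : -1 < α) (hα0 : α ≠ 0) :
    0 < xiOpt α x y ∧ xiOpt α x y < x ∧ xiOpt α x y < y ∧
      (0 < α → x * y < xiOpt α x y ∧ x < etaOpt α x y ∧ y < etaOpt α x y) ∧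
      (α < 0 → xiOpt α x y < x * y ∧ etaOpt α x y < 0) := by
  have hd := disc_pos hx0 hx1 hy0 hy1 hα1
  have hspos : 0 < Real.sqrt ((1 + α * (x + y)) ^ 2 - 4 * α * (1 + α) * x * y) :=
    Real.sqrt_pos.2 hd
  have key := fact_eq (x := x) (y := y) hα0 hd.le
  set ξ := xiOpt α x y with hξdef
  set η := etaOpt α x y with hηdef
  have hdiff := eta_sub_xi (x := x) (y := y) hα0
  rw [← hξdef, ← hηdef] at hdiff
  have h02 : ξ * η = ((1 + α) * x * y) / α := by
    rw [eq_div_iff hα0]; linear_combination -key 0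
  have hx2 : (x - ξ) * (x - η) = (x*y - x) / α := by
    rw [eq_div_iff hα0]; linear_combination -key x
  have hy2 : (y - ξ) * (y - η) = (x*y - y) / α := by
    rw [eq_div_iff hα0]; linear_combination -key y
  have hxy2 : (x*y - ξ) * (x*y - η) = x*y*(1-x)*(1-y) := by
    apply mul_left_cancel₀ hα0; linear_combination -key (x*y)
  have hxypos : 0 < x*y*(1-x)*(1-y) := by
    have := mul_pos (mul_pos (mul_pos hx0 hy0) (by linarith : (0:ℝ) < 1-x)) (by linarith : (0:ℝ) < 1-y)
    linarith [this]
  have hsum : ξ + η = (1 + α * (x + y)) / α := by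
    rw [hξdef, hηdef, xiOpt, etaOpt]; field_simp; ring
  have hxy3 : 0 < (x*y - ξ) * (x*y - η) := hxy2 ▸ hxypos
  have hxylt : x * y < x := by nlinarith
  have hxylt' : x * y < y := by nlinarith
  rcases lt_trichotomy α 0 with hneg | h | hpos
  · -- α < 0 : η < ξ
    have hlt : η < ξ := by
      rw [← sub_neg, hdiff]; exact div_neg_of_pos_of_neg hspos hneg
    have hprod : ξ * η < 0 := by
      rw [h02]; apply div_neg_of_pos_of_neg _ hneg
      nlinarith [mul_pos hx0 hy0]
    obtain ⟨hξ0, hη0⟩ | ⟨hξ0, hη0⟩ := mul_neg_iff.1 hprod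
    swap
    · linarith
    have hPx : 0 < (x - ξ) * (x - η) := by
      rw [hx2]; exact div_pos_of_neg_of_neg (by nlinarith) hneg
    have hPy : 0 < (y - ξ) * (y - η) := by
      rw [hy2]; exact div_pos_of_neg_of_neg (by nlinarith) hneg
    have hxξ : ξ < x := by
      obtain ⟨h1, h2⟩ | ⟨h1, h2⟩ := mul_pos_iff.1 hPx <;> linarith
    have hyξ : ξ < y := by
      obtain ⟨h1, h2⟩ | ⟨h1, h2⟩ := mul_pos_iff.1 hPy <;> linarith
    have hxyξ : ξ < x * y := by
      obtain ⟨h1, h2⟩ | ⟨h1, h2⟩ := mul_pos_iff.1 hxy3 <;> nlinarith [mul_pos hx0 hy0]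
    exact ⟨hξ0, hxξ, hyξ, fun h => absurd h (by linarith), fun _ => ⟨hxyξ, hη0⟩⟩
  · exact absurd h hα0
  · -- α > 0 : ξ < η
    have hlt : ξ < η := by
      have h1 : 0 < η - ξ := by rw [hdiff]; exact div_pos hspos hpos
      linarith
    have hprod : 0 < ξ * η := by
      rw [h02]; apply div_pos _ hpos; nlinarith [mul_pos hx0 hy0]
    have hsumpos : 0 < ξ + η := by
      rw [hsum]; apply div_pos _ hpos; nlinarith [mul_pos hx0 hy0]
    obtain ⟨hξ0, hη0⟩ | ⟨hξ0, hη0⟩ := mul_pos_iff.1 hprod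
    swap
    · linarith
    have hPx : (x - ξ) * (x - η) < 0 := by
      rw [hx2]; exact div_neg_of_neg_of_pos (by nlinarith) hpos
    have hPy : (y - ξ) * (y - η) < 0 := by
      rw [hy2]; exact div_neg_of_neg_of_pos (by nlinarith) hpos
    have hxm : ξ < x ∧ x < η := by
      obtain ⟨h1, h2⟩ | ⟨h1, h2⟩ := mul_neg_iff.1 hPx
      · exact ⟨by linarith, by linarith⟩
      · exfalso; linarith
    have hym : ξ < y ∧ y < η := by
      obtain ⟨h1, h2⟩ | ⟨h1, h2⟩ := mul_neg_iff.1 hPy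
      · exact ⟨by linarith, by linarith⟩
      · exfalso; linarith
    have hxyξ : x * y < ξ := by
      obtain ⟨h1, h2⟩ | ⟨h1, h2⟩ := mul_pos_iff.1 hxy3
      · linarith [hxm.2]
      · linarith
    exact ⟨hξ0, hxm.1, hym.1, fun _ => ⟨hxyξ, hxm.2, hym.2⟩, fun h => absurd h (by linarith)⟩

set_option maxHeartbeats 1000000 in
lemma T_pos1 {α x y : ℝ} (hx0 : 0 < x) (hx1 : x < 1) (hy0 : 0 < y) (hy1 : y < 1)
    (hα1 : -1 < α) (hα0 : α ≠ 0) : 0 < TOpt α x y := by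
  have hd := disc_pos hx0 hx1 hy0 hy1 hα1
  have key := fact_eq (x := x) (y := y) hα0 hd.le
  obtain ⟨hξ0, hξx, hξy, hposcase, hnegcase⟩ := xi_basic hx0 hx1 hy0 hy1 hα1 hα0
  set ξ := xiOpt α x y with hξdef
  set η := etaOpt α x y with hηdef
  have hdiff := eta_sub_xi (x := x) (y := y) hα0
  rw [← hξdef, ← hηdef] at hdiff
  have hxypos : 0 < x*y*(1-x)*(1-y) := by
    have := mul_pos (mul_pos (mul_pos hx0 hy0) (by linarith : (0:ℝ) < 1-x)) (by linarith : (0:ℝ) < 1-y)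
    linarith [this]
  rw [TOpt]
  rw [← hξdef]
  rcases lt_trichotomy α 0 with hneg | h | hpos
  · -- α < 0
    obtain ⟨hξxy, hη0⟩ := hnegcase hneg
    have hηξ : η < ξ := by
      rw [← sub_neg, hdiff]
      exact div_neg_of_pos_of_neg (Real.sqrt_pos.2 hd) hneg
    set σ := Real.sqrt (x*y*(1-x)*(1-y)) with hσdef
    have hσ2 : σ^2 = x*y*(1-x)*(1-y) := Real.sq_sqrt hxypos.le
    have hσpos : 0 < σ := Real.sqrt_pos.2 hxypos
    have hAM : 2*σ ≤ x*y + (1-x)*(1-y) := by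
      nlinarith [hσ2, hσpos, sq_nonneg (x*y - (1-x)*(1-y)), mul_pos hx0 hy0,
        mul_pos (by linarith : (0:ℝ) < 1-x) (by linarith : (0:ℝ) < 1-y)]
    have hFσ : α * ((x*y - σ) - ξ) * ((x*y - σ) - η)
        = σ * (1 + α*(x + y - 2*x*y) + 2*α*σ) := by
      linear_combination -key (x*y - σ) - α * hσ2
    have hz : x + y - 2*x*y + 2*σ ≤ 1 := by nlinarith [hAM]
    have hbr : 0 < 1 + α*(x + y - 2*x*y) + 2*α*σ := by
      nlinarith [mul_nonneg (by linarith : (0:ℝ) ≤ -α)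
        (by linarith : (0:ℝ) ≤ 1 - (x + y - 2*x*y + 2*σ))]
    have hP : ((x*y - σ) - ξ) * ((x*y - σ) - η) = (σ * (1 + α*(x + y - 2*x*y) + 2*α*σ))/α := by
      rw [eq_div_iff hα0]; linear_combination hFσ
    have hPneg : ((x*y - σ) - ξ) * ((x*y - σ) - η) < 0 := by
      rw [hP]; exact div_neg_of_pos_of_neg (mul_pos hσpos hbr) hneg
    have hlow : x*y - σ < ξ := by
      by_contra hcon
      push_neg at hcon
      nlinarith [hPneg]
    nlinarith [hσ2, hσpos]
  · exact absurd h hα0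
  · -- α > 0
    obtain ⟨hξxy, hxη, hyη⟩ := hposcase hpos
    rcases le_total x y with hxy | hxy
    · nlinarith [mul_pos (sub_pos.2 hξx) (sub_pos.2 hξxy),
        mul_pos (by nlinarith : (0:ℝ) < x - x*y) (sub_pos.2 hξx),
        mul_nonneg (mul_nonneg hx0.le (by linarith : (0:ℝ) ≤ 1-y)) (by linarith : (0:ℝ) ≤ y-x)]
    · nlinarith [mul_pos (sub_pos.2 hξy) (sub_pos.2 hξxy),
        mul_pos (by nlinarith : (0:ℝ) < y - x*y) (sub_pos.2 hξy),
        mul_nonneg (mul_nonneg hy0.le (by linarith : (0:ℝ) ≤ 1-x)) (by linarith : (0:ℝ) ≤ x-y)]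

set_option maxHeartbeats 1000000 in
lemma xi_mono {α₁ α₂ x y : ℝ} (hx0 : 0 < x) (hx1 : x < 1) (hy0 : 0 < y) (hy1 : y < 1)
    (hα11 : -1 < α₁) (hα10 : α₁ ≠ 0) (hα20 : α₂ ≠ 0) (hlt : α₁ < α₂) :
    xiOpt α₁ x y < xiOpt α₂ x y := by
  have hα21 : -1 < α₂ := lt_trans hα11 hlt
  have hd1 := disc_pos hx0 hx1 hy0 hy1 hα11
  have hd2 := disc_pos hx0 hx1 hy0 hy1 hα21
  obtain ⟨h1pos, h1x, h1y, _, _⟩ := xi_basic hx0 hx1 hy0 hy1 hα11 hα10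
  obtain ⟨h2pos, h2x, h2y, h2posc, h2negc⟩ := xi_basic hx0 hx1 hy0 hy1 hα21 hα20
  set ξ₁ := xiOpt α₁ x y with hξ1def
  set ξ₂ := xiOpt α₂ x y with hξ2def
  set η₂ := etaOpt α₂ x y with hη2def
  have hroot : α₁*ξ₁^2 - (1+α₁*(x+y))*ξ₁ + (1+α₁)*x*y = 0 := by
    linear_combination fact_eq (x := x) (y := y) hα10 hd1.le ξ₁
  have key₂ := fact_eq (x := x) (y := y) hα20 hd2.le
  have hval : (ξ₁ - ξ₂) * (ξ₁ - η₂) = ((α₂ - α₁)*(x - ξ₁)*(y - ξ₁))/α₂ := by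
    rw [eq_div_iff hα20]
    linear_combination hroot - key₂ ξ₁
  have hnum : 0 < (α₂ - α₁)*(x - ξ₁)*(y - ξ₁) :=
    mul_pos (mul_pos (sub_pos.2 hlt) (sub_pos.2 h1x)) (sub_pos.2 h1y)
  rcases lt_trichotomy α₂ 0 with hneg | h | hpos
  · obtain ⟨_, hη0⟩ := h2negc hneg
    have hQ : (ξ₁ - ξ₂) * (ξ₁ - η₂) < 0 := by
      rw [hval]; exact div_neg_of_pos_of_neg hnum hneg
    obtain ⟨ha, hb⟩ | ⟨ha, hb⟩ := mul_neg_iff.1 hQ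
    · linarith
    · linarith
  · exact absurd h hα20
  · obtain ⟨_, hxη, _⟩ := h2posc hpos
    have hQ : 0 < (ξ₁ - ξ₂) * (ξ₁ - η₂) := by
      rw [hval]; exact div_pos hnum hpos
    obtain ⟨ha, hb⟩ | ⟨ha, hb⟩ := mul_pos_iff.1 hQ
    · linarith
    · linarith


theorem bethe_detH_strictly_decreasing (di dj : ℕ) (hdi : 2 < di) (hdj : 2 < dj)
    (J : ℝ) (hJ : J ≠ 0) (qi qj : ℝ)
    (hqi : qi ∈ Set.Ioo (0:ℝ) 1) (hqj : qj ∈ Set.Ioo (0:ℝ) 1) :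
    StrictAntiOn
      (fun β : ℝ =>
        (((di:ℝ) - 1) / di) * (((dj:ℝ) - 1) / dj) / (qi * qj * (1 - qi) * (1 - qj))
          + (1 - ((di:ℝ) - 1) / di - ((dj:ℝ) - 1) / dj)
              / TOpt (Real.exp (4 * β * J) - 1) qi qj)
      (Set.Ioi (0:ℝ)) := by
  obtain ⟨hx0, hx1⟩ := hqi
  obtain ⟨hy0, hy1⟩ := hqj
  intro a ha b hb hab
  simp only [Set.mem_Ioi] at ha hb
  set αa := Real.exp (4 * a * J) - 1 with hαadef
  set αb := Real.exp (4 * b * J) - 1 with hαbdef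
  have hαa1 : -1 < αa := by have := Real.exp_pos (4 * a * J); rw [hαadef]; linarith
  have hαb1 : -1 < αb := by have := Real.exp_pos (4 * b * J); rw [hαbdef]; linarith
  have hne : ∀ c : ℝ, 0 < c → Real.exp (4 * c * J) - 1 ≠ 0 := by
    intro c hc h
    have h1 : Real.exp (4 * c * J) = 1 := by linarith
    have h2 : 4 * c * J = 0 := Real.exp_injective (by rw [h1, Real.exp_zero])
    have : J = 0 := by
      rcases mul_eq_zero.mp h2 with h3 | h3
      · exact absurd h3 (by positivity)
      · exact h3
    exact hJ this
  have hαa0 : αa ≠ 0 := hne a ha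
  have hαb0 : αb ≠ 0 := hne b hb
  have hTb : 0 < TOpt αb qi qj := T_pos1 hx0 hx1 hy0 hy1 hαb1 hαb0
  have hTa : 0 < TOpt αa qi qj := T_pos1 hx0 hx1 hy0 hy1 hαa1 hαa0
  have hT : TOpt αb qi qj < TOpt αa qi qj := by
    rcases hJ.lt_or_gt with hJneg | hJpos
    · -- J < 0 : αb < αa < 0
      have hlt : αb < αa := by
        rw [hαadef, hαbdef, sub_lt_sub_iff_right]
        exact Real.exp_lt_exp.2 (by nlinarith)
      have hαaneg : αa < 0 := by
        rw [hαadef, sub_neg]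
        calc Real.exp (4 * a * J) < Real.exp 0 := Real.exp_lt_exp.2 (by nlinarith)
        _ = 1 := Real.exp_zero
      have hξ := xi_mono hx0 hx1 hy0 hy1 hαb1 hαb0 hαa0 hlt
      obtain ⟨_, _, _, _, hnega⟩ := xi_basic hx0 hx1 hy0 hy1 hαa1 hαa0
      obtain ⟨haxy, _⟩ := hnega hαaneg
      rw [TOpt, TOpt]
      nlinarith [hξ, haxy]
    · -- J > 0 : 0 < αa < αb
      have hlt : αa < αb := by
        rw [hαadef, hαbdef, sub_lt_sub_iff_right]
        exact Real.exp_lt_exp.2 (by nlinarith)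
      have hαapos : 0 < αa := by
        rw [hαadef, sub_pos]
        calc (1:ℝ) = Real.exp 0 := Real.exp_zero.symm
        _ < Real.exp (4 * a * J) := Real.exp_lt_exp.2 (by positivity)
      have hξ := xi_mono hx0 hx1 hy0 hy1 hαa1 hαa0 hαb0 hlt
      obtain ⟨_, _, _, hposa, _⟩ := xi_basic hx0 hx1 hy0 hy1 hαa1 hαa0
      obtain ⟨haxy, _, _⟩ := hposa hαapos
      rw [TOpt, TOpt]
      nlinarith [hξ, haxy]
  have hdi3 : (3:ℝ) ≤ (di:ℝ) := by exact_mod_cast hdi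
  have hdj3 : (3:ℝ) ≤ (dj:ℝ) := by exact_mod_cast hdj
  have hA : (2:ℝ)/3 ≤ ((di:ℝ) - 1) / di := by
    rw [div_le_div_iff₀ (by norm_num) (by linarith)]; linarith
  have hB : (2:ℝ)/3 ≤ ((dj:ℝ) - 1) / dj := by
    rw [div_le_div_iff₀ (by norm_num) (by linarith)]; linarith
  have hc2 : (1 - ((di:ℝ) - 1) / di - ((dj:ℝ) - 1) / dj) < 0 := by linarith
  simp only
  apply add_lt_add_right
  rw [div_lt_div_iff₀ hTb hTa]
  exact mul_lt_mul_of_neg_left hT hc2
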